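/- Let Γ ⊂ ℝⁿ be the convex hull of {0} and a polytope contained in ℝⁿ₊, and let γ be a face of Γ with 0 ∈ γ and dual cone σ(γ). Then the relative interior of γ is contained in the interior of ℝⁿ₊ if and only if σ(γ) ∩ ℝⁿ₊ = {0}. -/

import Mathlib

open scoped BigOperators

/-- The standard pairing `⟨u,v⟩ = Σᵢ uᵢvᵢ` on `ℝⁿ`. -/
def dotR {n : ℕ} (u v : Fin n → ℝ) : ℝ := ∑ i, u i * v i

/-- The face of `K` consisting of the minimizers of `⟨u,·⟩` on `K`. -/
def minimizerFace {n : ℕ} (K : Set (Fin n → ℝ)) (u : Fin n → ℝ) : Set (Fin n → ℝ) :=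
  {v ∈ K | ∀ w ∈ K, dotR u v ≤ dotR u w}

/-- `γ` is a face of `K`: the set of minimizers of some linear functional on `K`. -/
def IsFaceOf {n : ℕ} (γ K : Set (Fin n → ℝ)) : Prop :=
  ∃ u : Fin n → ℝ, γ = minimizerFace K u

/-- The cone `σ(γ)` dual to a face `γ` of `K`: the closure of the set of linear
functionals `u` whose minimizer face on `K` is exactly `γ`. -/
def dualFaceCone {n : ℕ} (K γ : Set (Fin n → ℝ)) : Set (Fin n → ℝ) :=
  closure {u | minimizerFace K u = γ}

/-- The nonnegative orthant `ℝⁿ₊`. -/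
def orthant (n : ℕ) : Set (Fin n → ℝ) := {x | ∀ i, 0 ≤ x i}

/-- The cone generated by a finite set `G`: nonnegative combinations of elements of `G`. -/
def conicHull {n : ℕ} (G : Finset (Fin n → ℝ)) : Set (Fin n → ℝ) :=
  {x | ∃ c : {g // g ∈ G} → ℝ, (∀ g, 0 ≤ c g) ∧ x = ∑ g, c g • (g : Fin n → ℝ)}

/-- `F` is a face of the cone `σ`: the intersection of `σ` with the kernel of a linear
functional that is nonnegative on `σ`. -/
def IsFaceOfCone {n : ℕ} (F σ : Set (Fin n → ℝ)) : Prop :=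
  ∃ u : Fin n → ℝ, (∀ x ∈ σ, 0 ≤ dotR u x) ∧ F = {x ∈ σ | dotR u x = 0}

lemma dotR_zero_right {n : ℕ} (u : Fin n → ℝ) : dotR u 0 = 0 := by simp [dotR]

lemma dotR_add_left {n : ℕ} (u w v : Fin n → ℝ) : dotR (u + w) v = dotR u v + dotR w v := by
  simp [dotR, add_mul, Finset.sum_add_distrib]

lemma dotR_smul_left {n : ℕ} (s : ℝ) (u v : Fin n → ℝ) : dotR (s • u) v = s * dotR u v := by
  simp [dotR, Finset.mul_sum, mul_assoc]

lemma dotR_single_left {n : ℕ} (i : Fin n) (v : Fin n → ℝ) :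
    dotR (Pi.single i 1) v = v i := by
  simp [dotR, Pi.single_apply, Finset.sum_ite_eq]

lemma dotR_smul_right {n : ℕ} (s : ℝ) (u v : Fin n → ℝ) : dotR u (s • v) = s * dotR u v := by
  simp only [dotR, Finset.mul_sum, Pi.smul_apply, smul_eq_mul]
  exact Finset.sum_congr rfl fun i _ => by ring

lemma dotR_add_right {n : ℕ} (u v w : Fin n → ℝ) : dotR u (v + w) = dotR u v + dotR u w := by
  simp [dotR, mul_add, Finset.sum_add_distrib]

lemma continuous_dotR_left {n : ℕ} (v : Fin n → ℝ) : Continuous fun u : Fin n → ℝ => dotR u v :=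
  continuous_finset_sum _ fun i _ => (continuous_apply i).mul continuous_const

lemma orthant_eq_pi (n : ℕ) : orthant n = Set.pi Set.univ fun _ => Set.Ici (0 : ℝ) := by
  ext x; simp only [orthant, Set.mem_setOf_eq, Set.mem_pi, Set.mem_univ, Set.mem_Ici,
    forall_true_left, true_implies]

lemma convex_orthant (n : ℕ) : Convex ℝ (orthant n) := by
  rw [orthant_eq_pi]; exact convex_pi fun i _ => convex_Ici 0

lemma interior_orthant (n : ℕ) : interior (orthant n) = {x | ∀ i, 0 < x i} := by
  rw [orthant_eq_pi, interior_pi_set Set.finite_univ]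
  ext x; simp [Set.mem_pi]

lemma exists_extend {n : ℕ} {γ : Set (Fin n → ℝ)} {p q : Fin n → ℝ}
    (hp : p ∈ intrinsicInterior ℝ γ) (hq : q ∈ γ) :
    ∃ ε : ℝ, 0 < ε ∧ p + ε • (p - q) ∈ γ := by
  rw [mem_intrinsicInterior] at hp
  obtain ⟨y, hy, hyp⟩ := hp
  have hpA : p ∈ affineSpan ℝ γ := hyp ▸ y.2
  have hqA : q ∈ affineSpan ℝ γ := subset_affineSpan ℝ γ hq
  have hmem : ∀ t : ℝ, AffineMap.lineMap q p t ∈ affineSpan ℝ γ :=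
    fun t => AffineMap.lineMap_mem t hqA hpA
  set c : ℝ → affineSpan ℝ γ := fun t => ⟨AffineMap.lineMap q p t, hmem t⟩ with hc
  have hcont : Continuous c :=
    Continuous.subtype_mk
      (AffineMap.lineMap q p : ℝ →ᵃ[ℝ] (Fin n → ℝ)).continuous_of_finiteDimensional _
  have hc1 : c 1 = y := by
    apply Subtype.ext
    simp only [hc, AffineMap.lineMap_apply_one]
    exact hyp.symm
  have hopen : IsOpen (c ⁻¹' interior (((↑) : affineSpan ℝ γ → (Fin n → ℝ)) ⁻¹' γ)) :=
    isOpen_interior.preimage hcont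
  have h1 : (1 : ℝ) ∈ c ⁻¹' interior (((↑) : affineSpan ℝ γ → (Fin n → ℝ)) ⁻¹' γ) := by
    simp only [Set.mem_preimage, hc1]; exact hy
  obtain ⟨ε, hε, hball⟩ := Metric.isOpen_iff.mp hopen 1 h1
  refine ⟨ε / 2, by linarith, ?_⟩
  have hballmem : (1 + ε / 2 : ℝ) ∈ Metric.ball (1 : ℝ) ε := by
    rw [Metric.mem_ball, Real.dist_eq]
    rw [show (1 + ε / 2 - 1 : ℝ) = ε / 2 by ring, abs_of_pos (by linarith)]
    linarith
  have := interior_subset (hball hballmem)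
  simp only [Set.mem_preimage, hc] at this
  have heq : AffineMap.lineMap q p (1 + ε / 2 : ℝ) = p + (ε / 2) • (p - q) := by
    rw [AffineMap.lineMap_apply_module']
    module
  rwa [heq] at this

/-- let `Γ ⊂ ℝⁿ` be the convex hull of `{0}` and a polytope contained in
`ℝⁿ₊`, with `dim Γ = n`, and let `γ` be a face of `Γ` with `0 ∈ γ`. Then the relative
interior of `γ` is contained in the interior of `ℝⁿ₊` if and only if
`σ(γ) ∩ ℝⁿ₊ = {0}`. -/
theorem relint_in_interior_iff_dual_cone_meets_orthant_trivially {n : ℕ}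
    (V : Finset (Fin n → ℝ)) (hV : ∀ v ∈ V, ∀ i, 0 ≤ v i)
    (Γ : Set (Fin n → ℝ))
    (hΓ : Γ = convexHull ℝ (insert 0 (convexHull ℝ (V : Set (Fin n → ℝ)))))
    (hdim : Module.finrank ℝ (vectorSpan ℝ Γ) = n)
    (γ : Set (Fin n → ℝ)) (hγ : IsFaceOf γ Γ) (h0γ : (0 : Fin n → ℝ) ∈ γ) :
    intrinsicInterior ℝ γ ⊆ interior (orthant n) ↔
      dualFaceCone Γ γ ∩ orthant n = {0} := by
  obtain ⟨u₀, hu₀⟩ := hγ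
  -- Γ is contained in the orthant
  have hΓO : Γ ⊆ orthant n := by
    rw [hΓ]
    apply convexHull_min _ (convex_orthant n)
    rw [Set.insert_subset_iff]
    exact ⟨fun i => le_rfl, convexHull_min (fun v hv => hV v hv) (convex_orthant n)⟩
  have h0γ' := h0γ
  rw [hu₀] at h0γ'
  have h0Γ : (0 : Fin n → ℝ) ∈ Γ := h0γ'.1
  have hu₀nn : ∀ v ∈ Γ, 0 ≤ dotR u₀ v := by
    intro v hv
    have := h0γ'.2 v hv
    rwa [dotR_zero_right] at this
  have hγΓ : γ ⊆ Γ := by rw [hu₀]; exact fun v hv => hv.1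
  -- characterization of γ
  have hγchar : γ = {v ∈ Γ | dotR u₀ v = 0} := by
    rw [hu₀]
    ext v
    constructor
    · rintro ⟨hvΓ, hmin⟩
      have h1 := hmin 0 h0Γ
      rw [dotR_zero_right] at h1
      exact ⟨hvΓ, le_antisymm h1 (hu₀nn v hvΓ)⟩
    · rintro ⟨hvΓ, hzero⟩
      exact ⟨hvΓ, fun w hw => by rw [hzero]; exact hu₀nn w hw⟩
  -- γ is convex
  have hγconv : Convex ℝ γ := by
    rw [hγchar]
    intro x hx y hy a b ha hb hab
    refine ⟨(hΓ ▸ convex_convexHull ℝ _) hx.1 hy.1 ha hb hab, ?_⟩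
    rw [dotR_add_right, dotR_smul_right, dotR_smul_right, hx.2, hy.2]
    ring
  have hγne : γ.Nonempty := ⟨0, h0γ⟩
  -- 0 belongs to the dual cone
  have h0dual : (0 : Fin n → ℝ) ∈ dualFaceCone Γ γ := by
    have hsmul : ∀ s : ℝ, 0 < s → minimizerFace Γ (s • u₀) = γ := by
      intro s hs
      rw [hu₀]
      ext v
      simp only [minimizerFace, Set.mem_setOf_eq, dotR_smul_left]
      constructor
      · rintro ⟨hvΓ, hmin⟩
        exact ⟨hvΓ, fun w hw => le_of_mul_le_mul_left (hmin w hw) hs⟩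
      · rintro ⟨hvΓ, hmin⟩
        exact ⟨hvΓ, fun w hw => mul_le_mul_of_nonneg_left (hmin w hw) hs.le⟩
    have htend : Filter.Tendsto (fun k : ℕ => (1 / ((k : ℝ) + 1)) • u₀) Filter.atTop
        (nhds 0) := by
      have := (tendsto_one_div_add_atTop_nhds_zero_nat (𝕜 := ℝ)).smul_const u₀
      rwa [zero_smul] at this
    exact mem_closure_of_tendsto htend (Filter.Eventually.of_forall fun k =>
      hsmul _ (by positivity))
  -- if γ lies in a coordinate hyperplane, then the corresponding basis vector is in σ(γ)
  have hsingle : ∀ i : Fin n, (∀ v ∈ γ, v i = 0) →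
      Pi.single i 1 ∈ dualFaceCone Γ γ ∩ orthant n := by
    intro i hγi
    constructor
    · have hmf : ∀ s : ℝ, 0 < s → minimizerFace Γ (Pi.single i 1 + s • u₀) = γ := by
        intro s hs
        ext v
        simp only [minimizerFace, Set.mem_setOf_eq, dotR_add_left, dotR_single_left,
          dotR_smul_left]
        constructor
        · rintro ⟨hvΓ, hmin⟩
          have h1 := hmin 0 h0Γ
          rw [dotR_zero_right] at h1
          simp only [Pi.zero_apply, mul_zero, add_zero] at h1
          have hvi : 0 ≤ v i := hΓO hvΓ i
          have hdot : 0 ≤ s * dotR u₀ v := mul_nonneg hs.le (hu₀nn v hvΓ)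
          have hdz : dotR u₀ v = 0 := by nlinarith
          rw [hγchar]
          exact ⟨hvΓ, hdz⟩
        · intro hvγ
          have hvi : v i = 0 := hγi v hvγ
          have hdz : dotR u₀ v = 0 := by
            rw [hγchar] at hvγ; exact hvγ.2
          refine ⟨hγΓ hvγ, fun w hw => ?_⟩
          rw [hvi, hdz]
          have := mul_nonneg hs.le (hu₀nn w hw)
          have := hΓO hw i
          nlinarith
      have htend : Filter.Tendsto (fun k : ℕ => Pi.single i 1 + (1 / ((k : ℝ) + 1)) • u₀)
          Filter.atTop (nhds (Pi.single i 1)) := by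
        have := ((tendsto_one_div_add_atTop_nhds_zero_nat (𝕜 := ℝ)).smul_const u₀).const_add
          (Pi.single i (1 : ℝ))
        rwa [zero_smul, add_zero] at this
      exact mem_closure_of_tendsto htend (Filter.Eventually.of_forall fun k =>
        hmf _ (by positivity))
    · intro j
      rcases eq_or_ne j i with rfl | hji
      · simp
      · simp [Pi.single_apply, hji]
  constructor
  · -- relint γ ⊆ int orthant → σ(γ) ∩ orthant = {0}
    intro h
    rw [Set.eq_singleton_iff_unique_mem]
    refine ⟨⟨h0dual, fun i => le_rfl⟩, ?_⟩
    rintro w ⟨hwσ, hwO⟩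
    obtain ⟨p, hp⟩ := Set.Nonempty.intrinsicInterior hγconv hγne
    have hpint := h hp
    rw [interior_orthant] at hpint
    have hpγ : p ∈ γ := intrinsicInterior_subset hp
    have hdotp : dotR w p = 0 := by
      have hsub : {u : Fin n → ℝ | minimizerFace Γ u = γ} ⊆ {u | dotR u p = 0} := by
        intro u hu
        have hpmin : p ∈ minimizerFace Γ u := by rw [hu]; exact hpγ
        have h0min : (0 : Fin n → ℝ) ∈ minimizerFace Γ u := by rw [hu]; exact h0γ
        have h1 := hpmin.2 0 h0Γ
        have h2 := h0min.2 p (hγΓ hpγ)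
        rw [dotR_zero_right] at h1 h2
        exact le_antisymm h1 h2
      have hclosed : IsClosed {u : Fin n → ℝ | dotR u p = 0} :=
        isClosed_eq (continuous_dotR_left p) continuous_const
      exact closure_minimal hsub hclosed hwσ
    funext i
    have hterms : ∀ j ∈ Finset.univ, 0 ≤ w j * p j :=
      fun j _ => mul_nonneg (hwO j) (hpint j).le
    have := (Finset.sum_eq_zero_iff_of_nonneg hterms).mp hdotp i (Finset.mem_univ i)
    rcases mul_eq_zero.mp this with h1 | h2
    · exact h1
    · exact absurd h2 (hpint i).ne'
  · -- σ(γ) ∩ orthant = {0} → relint γ ⊆ int orthant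
    intro hRHS p hp
    rw [interior_orthant]
    intro i
    by_contra hni
    have hpγ : p ∈ γ := intrinsicInterior_subset hp
    have hpi : p i = 0 := le_antisymm (not_lt.mp hni) (hΓO (hγΓ hpγ) i)
    have hγi : ∀ q ∈ γ, q i = 0 := by
      intro q hq
      obtain ⟨ε, hε, hr⟩ := exists_extend hp hq
      have hri : 0 ≤ (p + ε • (p - q)) i := hΓO (hγΓ hr) i
      have hqi : 0 ≤ q i := hΓO (hγΓ hq) i
      simp only [Pi.add_apply, Pi.smul_apply, Pi.sub_apply, smul_eq_mul, hpi] at hri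
      nlinarith
    have hmem := hsingle i hγi
    rw [hRHS] at hmem
    have := congrFun hmem i
    simp at this
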